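/- For a ∈ A with A, B closed subspaces of a Hilbert space H, and for every k ≥ 0, we have P_A^⊥ P_B (P_A P_B)^k a = −(P_A^⊥ P_B^⊥)^{k+1} a. -/

import Mathlib

/-- The orthogonal projection of `H` onto the closed subspace `K`, as a map `H →L[ℂ] H`. -/
noncomputable def projCLM {H : Type*} [NormedAddCommGroup H] [InnerProductSpace ℂ H]
    (K : Submodule ℂ H) [K.HasOrthogonalProjection] : H →L[ℂ] H :=
  K.subtypeL.comp K.orthogonalProjectionOnto

lemma projCLM_of_mem {H : Type*} [NormedAddCommGroup H] [InnerProductSpace ℂ H]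
    (K : Submodule ℂ H) [K.HasOrthogonalProjection] {x : H} (hx : x ∈ K) :
    projCLM K x = x := by
  exact K.starProjection_eq_self_iff.mpr hx

lemma projCLM_mem {H : Type*} [NormedAddCommGroup H] [InnerProductSpace ℂ H]
    (K : Submodule ℂ H) [K.HasOrthogonalProjection] (x : H) :
    projCLM K x ∈ K := by
  simp [projCLM]

lemma projCLM_idem {H : Type*} [NormedAddCommGroup H] [InnerProductSpace ℂ H]
    (K : Submodule ℂ H) [K.HasOrthogonalProjection] (x : H) :
    projCLM K (projCLM K x) = projCLM K x :=
  projCLM_of_mem K (projCLM_mem K x)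

theorem proj_identity_pow {H : Type*} [NormedAddCommGroup H]
    [InnerProductSpace ℂ H] [CompleteSpace H] (A B : Submodule ℂ H)
    (hA : IsClosed (A : Set H)) (hB : IsClosed (B : Set H))
    [CompleteSpace A] [CompleteSpace B]
    (a : H) (ha : a ∈ A) (k : ℕ) :
    (1 - projCLM A) (projCLM B (((projCLM A * projCLM B) ^ k) a)) =
      -((((1 - projCLM A) * (1 - projCLM B)) ^ (k + 1)) a) := by
  induction k with
  | zero =>
    simp [ContinuousLinearMap.sub_apply, ContinuousLinearMap.mul_apply,
      projCLM_of_mem A ha]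
  | succ n ih =>
    have key : (((1 - projCLM A) * (1 - projCLM B)) ^ (n + 2)) a =
        ((1 - projCLM A) * (1 - projCLM B)) ((((1 - projCLM A) * (1 - projCLM B)) ^ (n + 1)) a) := by
      rw [pow_succ']
      simp [ContinuousLinearMap.mul_apply]
    have ih' : (((1 - projCLM A) * (1 - projCLM B)) ^ (n + 1)) a =
        -((1 - projCLM A) (projCLM B (((projCLM A * projCLM B) ^ n) a))) := by
      rw [ih, neg_neg]
    rw [key, ih']
    have key2 : (((projCLM A * projCLM B) ^ (n + 1)) a) =
        projCLM A (projCLM B (((projCLM A * projCLM B) ^ n) a)) := by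
      rw [pow_succ']
      simp [ContinuousLinearMap.mul_apply]
    rw [key2]
    set x := projCLM B (((projCLM A * projCLM B) ^ n) a) with hx
    simp only [ContinuousLinearMap.mul_apply, ContinuousLinearMap.sub_apply,
      ContinuousLinearMap.one_apply, map_sub, map_neg]
    rw [projCLM_idem B, projCLM_idem A]
    abel
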